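/- Let m ≥ 2, τ ∈ S_m, and suppose that the ratios |S_{n+1}(τ)|/|S_n(τ)| converge as n → ∞ to a limit L > 0. Fix l ≥ 2 and let {k_n} be any sequence with 1 ≤ k_n ≤ n-l+1. Then limsup_{n→∞} |A^{(n)}_{l;k_n} ∩ S_n(τ)| / |S_n(τ)| ≤ |S_l(τ)| / L^{l-1}. -/
import Mathlib

open Filter

def Contains {n m : ℕ} (σ : Fin n → Fin n) (τ : Fin m → Fin m) : Prop :=
  ∃ f : Fin m → Fin n, StrictMono f ∧ ∀ j k : Fin m, σ (f j) < σ (f k) ↔ τ j < τ k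

def Avoids {n m : ℕ} (σ : Fin n → Fin n) (τ : Fin m → Fin m) : Prop :=
  ¬ Contains σ τ

def AvoidSet (n : ℕ) {m : ℕ} (τ : Equiv.Perm (Fin m)) : Set (Equiv.Perm (Fin n)) :=
  {σ : Equiv.Perm (Fin n) | Avoids ⇑σ ⇑τ}

def ClusterAt {n : ℕ} (l k a : ℕ) (σ : Equiv.Perm (Fin n)) : Prop :=
  (Finset.univ.filter fun i : Fin n => a ≤ (i : ℕ) + 1 ∧ (i : ℕ) + 1 < a + l).image
      (fun i => (σ i : ℕ) + 1) = Finset.Ico k (k + l)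

def ClusterEvent (n l k : ℕ) : Set (Equiv.Perm (Fin n)) :=
  {σ : Equiv.Perm (Fin n) | ∃ a : ℕ, 1 ≤ a ∧ a ≤ n - l + 1 ∧ ClusterAt l k a σ}

def ClusterFree {m : ℕ} (τ : Equiv.Perm (Fin m)) : Prop :=
  ∀ l a k : ℕ, 2 ≤ l → l ≤ m - 1 → 1 ≤ a → a + l ≤ m + 1 → ¬ ClusterAt l k a τ

def ContainsTightly12 {m : ℕ} (τ : Equiv.Perm (Fin m)) : Prop :=
  ∃ i j : Fin m, (j : ℕ) = (i : ℕ) + 1 ∧ (τ j : ℕ) = (τ i : ℕ) + 1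

def ContainsTightly21 {m : ℕ} (τ : Equiv.Perm (Fin m)) : Prop :=
  ∃ i j : Fin m, (j : ℕ) = (i : ℕ) + 1 ∧ (τ i : ℕ) = (τ j : ℕ) + 1

def perm123 : Equiv.Perm (Fin 3) := Equiv.refl (Fin 3)

def perm321 : Equiv.Perm (Fin 3) :=
  ⟨![2, 1, 0], ![2, 1, 0], by intro x; fin_cases x <;> rfl, by intro x; fin_cases x <;> rfl⟩

def p2413 : Equiv.Perm (Fin 4) :=
  ⟨![1, 3, 0, 2], ![2, 0, 3, 1], by intro x; fin_cases x <;> rfl, by intro x; fin_cases x <;> rfl⟩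

def p3142 : Equiv.Perm (Fin 4) :=
  ⟨![2, 0, 3, 1], ![1, 3, 0, 2], by intro x; fin_cases x <;> rfl, by intro x; fin_cases x <;> rfl⟩

def SepSet (n : ℕ) : Set (Equiv.Perm (Fin n)) :=
  {σ : Equiv.Perm (Fin n) | Avoids ⇑σ ⇑p2413 ∧ Avoids ⇑σ ⇑p3142}


namespace AvoidClusterAux

/-! ### Elementary encoding functions -/

def eF (a' l j : ℕ) : ℕ := if j ≤ a' then j else j + (l - 1)

def cF (k' l v : ℕ) : ℕ := if v < k' then v else if v < k' + l then k' else v - (l - 1)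

lemma eF_mono {a' l : ℕ} : StrictMono (eF a' l) := by
  intro x y h; unfold eF; split <;> split <;> omega

lemma eF_lt {n n' a' l j : ℕ} (hn' : n' + l = n + 1) (hl : 0 < l) (hj : j < n') :
    eF a' l j < n := by unfold eF; split <;> omega

lemma cF_mono {k' l : ℕ} : Monotone (cF k' l) := by
  intro x y h; unfold cF; split_ifs <;> omega


lemma cF_le {k' l v n : ℕ} (hk' : k' + l ≤ n) (hv : v < n) (hl : 0 < l) :
    cF k' l v ≤ n - l := by unfold cF; split_ifs <;> omega

lemma cF_inj {k' l x y : ℕ} (hl : 0 < l) (h : cF k' l x = cF k' l y) :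
    x = y ∨ (k' ≤ x ∧ x < k' + l ∧ k' ≤ y ∧ y < k' + l) := by
  unfold cF at h; split_ifs at h <;> omega

def embB {n : ℕ} (l a' : ℕ) (ha : a' + l ≤ n) (i : Fin l) : Fin n :=
  ⟨a' + (i : ℕ), by have := i.isLt; omega⟩

@[simp] lemma embB_val {n : ℕ} (l a' : ℕ) (ha : a' + l ≤ n) (i : Fin l) :
    (embB l a' ha i : ℕ) = a' + (i : ℕ) := rfl

def embE {n n' : ℕ} (l a' : ℕ) (hn' : n' + l = n + 1) (hl : 0 < l) (j : Fin n') : Fin n :=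
  ⟨eF a' l (j : ℕ), eF_lt hn' hl j.isLt⟩

@[simp] lemma embE_val {n n' : ℕ} (l a' : ℕ) (hn' : n' + l = n + 1) (hl : 0 < l) (j : Fin n') :
    (embE l a' hn' hl j : ℕ) = eF a' l (j : ℕ) := rfl

def betaF {n : ℕ} (l k' a' : ℕ) (hl : 0 < l) (ha : a' + l ≤ n) (σ : Equiv.Perm (Fin n)) :
    Fin l → Fin l :=
  fun i => ⟨min ((σ (embB l a' ha i) : ℕ) - k') (l - 1), by omega⟩

lemma betaF_congr {n : ℕ} {l k' a1 a2 : ℕ} (h : a1 = a2) (hl : 0 < l)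
    (ha1 : a1 + l ≤ n) (ha2 : a2 + l ≤ n) (σ : Equiv.Perm (Fin n)) :
    betaF l k' a1 hl ha1 σ = betaF l k' a2 hl ha2 σ := by subst h; rfl

lemma betaF_val_def {n : ℕ} (l k' a' : ℕ) (hl : 0 < l) (ha : a' + l ≤ n)
    (σ : Equiv.Perm (Fin n)) (i : Fin l) :
    (betaF l k' a' hl ha σ i : ℕ) = min ((σ (embB l a' ha i) : ℕ) - k') (l - 1) := rfl

def piF {n n' : ℕ} (l k' a' : ℕ) (hn' : n' + l = n + 1) (hl : 0 < l) (hn0 : 0 < n')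
    (σ : Equiv.Perm (Fin n)) : Fin n' → Fin n' :=
  fun j => ⟨min (cF k' l ((σ (embE l a' hn' hl j)) : ℕ)) (n' - 1), by omega⟩

lemma piF_val_def {n n' : ℕ} (l k' a' : ℕ) (hn' : n' + l = n + 1) (hl : 0 < l) (hn0 : 0 < n')
    (σ : Equiv.Perm (Fin n)) (j : Fin n') :
    (piF l k' a' hn' hl hn0 σ j : ℕ)
      = min (cF k' l ((σ (embE l a' hn' hl j)) : ℕ)) (n' - 1) := rfl

/-! ### Facts derived from `ClusterAt` -/

lemma fact_of_clusterAt {n l k a : ℕ} {σ : Equiv.Perm (Fin n)}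
    (hk : 1 ≤ k) (ha : 1 ≤ a) (h : ClusterAt l k a σ) (i : Fin n) :
    (a - 1 ≤ (i : ℕ) ∧ (i : ℕ) < a - 1 + l) ↔
      (k - 1 ≤ (σ i : ℕ) ∧ (σ i : ℕ) < k - 1 + l) := by
  unfold ClusterAt at h
  constructor
  · intro hi
    have hmem : ((σ i : ℕ) + 1) ∈ Finset.Ico k (k + l) := by
      rw [← h]
      exact Finset.mem_image_of_mem _
        (by simp only [Finset.mem_filter, Finset.mem_univ, true_and]; omega)
    rw [Finset.mem_Ico] at hmem; omega
  · intro hv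
    have hmem : ((σ i : ℕ) + 1) ∈
        (Finset.univ.filter fun j : Fin n => a ≤ (j : ℕ) + 1 ∧ (j : ℕ) + 1 < a + l).image
          (fun j => (σ j : ℕ) + 1) := by
      rw [h, Finset.mem_Ico]; omega
    obtain ⟨i', hi', heq⟩ := Finset.mem_image.1 hmem
    rw [Finset.mem_filter] at hi'
    obtain ⟨-, hi2⟩ := hi'
    have hii : i' = i := σ.injective (Fin.ext (by omega))
    rw [hii] at hi2
    omega

/-! ### Properties of `betaF` -/

section Core

variable {n n' m : ℕ} {τ : Equiv.Perm (Fin m)} {l k' a' : ℕ} {σ : Equiv.Perm (Fin n)}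

lemma block_val (hl : 0 < l) (ha : a' + l ≤ n)
    (hfact : ∀ i : Fin n, (a' ≤ (i : ℕ) ∧ (i : ℕ) < a' + l) ↔
      (k' ≤ (σ i : ℕ) ∧ (σ i : ℕ) < k' + l)) (i : Fin l) :
    k' ≤ (σ (embB l a' ha i) : ℕ) ∧ (σ (embB l a' ha i) : ℕ) < k' + l := by
  refine (hfact _).1 ?_
  rw [embB_val]
  have := i.isLt; omega

lemma betaF_inj (hl : 0 < l) (ha : a' + l ≤ n)
    (hfact : ∀ i : Fin n, (a' ≤ (i : ℕ) ∧ (i : ℕ) < a' + l) ↔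
      (k' ≤ (σ i : ℕ) ∧ (σ i : ℕ) < k' + l)) :
    Function.Injective (betaF l k' a' hl ha σ) := by
  intro i1 i2 h
  have hv := congrArg Fin.val h
  rw [betaF_val_def, betaF_val_def] at hv
  have b1 := block_val hl ha hfact i1
  have b2 := block_val hl ha hfact i2
  have hvv : (σ (embB l a' ha i1) : ℕ) = (σ (embB l a' ha i2) : ℕ) := by omega
  have he := congrArg Fin.val (σ.injective (Fin.ext hvv))
  rw [embB_val, embB_val] at he
  exact Fin.ext (by omega)

lemma betaF_avoids (hl : 0 < l) (ha : a' + l ≤ n)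
    (hfact : ∀ i : Fin n, (a' ≤ (i : ℕ) ∧ (i : ℕ) < a' + l) ↔
      (k' ≤ (σ i : ℕ) ∧ (σ i : ℕ) < k' + l))
    (hav : Avoids ⇑σ ⇑τ) : Avoids (betaF l k' a' hl ha σ) ⇑τ := by
  rintro ⟨f, hf, hpat⟩
  refine hav ⟨fun j => embB l a' ha (f j), ?_, ?_⟩
  · intro x y hxy
    have h2 : (f x : ℕ) < (f y : ℕ) := hf hxy
    simp only [Fin.lt_def, embB_val]
    omega
  · intro j k
    rw [← hpat j k]
    have b1 := block_val hl ha hfact (f j)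
    have b2 := block_val hl ha hfact (f k)
    simp only [Fin.lt_def, betaF_val_def]
    omega

/-! ### Properties of `piF` -/

lemma embE_block (hn' : n' + l = n + 1) (hl : 0 < l) (ha : a' + l ≤ n)
    (hfact : ∀ i : Fin n, (a' ≤ (i : ℕ) ∧ (i : ℕ) < a' + l) ↔
      (k' ≤ (σ i : ℕ) ∧ (σ i : ℕ) < k' + l))
    (j : Fin n')
    (hb : k' ≤ (σ (embE l a' hn' hl j) : ℕ) ∧ (σ (embE l a' hn' hl j) : ℕ) < k' + l) :
    (j : ℕ) = a' := by
  have hpos := (hfact _).2 hb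
  rw [embE_val] at hpos
  unfold eF at hpos
  split at hpos <;> omega

lemma piF_inj (hn' : n' + l = n + 1) (hl : 0 < l) (hn0 : 0 < n')
    (hk' : k' + l ≤ n) (ha : a' + l ≤ n)
    (hfact : ∀ i : Fin n, (a' ≤ (i : ℕ) ∧ (i : ℕ) < a' + l) ↔
      (k' ≤ (σ i : ℕ) ∧ (σ i : ℕ) < k' + l)) :
    Function.Injective (piF l k' a' hn' hl hn0 σ) := by
  intro j1 j2 h
  have hv := congrArg Fin.val h
  rw [piF_val_def, piF_val_def] at hv
  have c1 : cF k' l ((σ (embE l a' hn' hl j1)) : ℕ) ≤ n - l :=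
    cF_le hk' (σ (embE l a' hn' hl j1)).isLt hl
  have c2 : cF k' l ((σ (embE l a' hn' hl j2)) : ℕ) ≤ n - l :=
    cF_le hk' (σ (embE l a' hn' hl j2)).isLt hl
  have hcc : cF k' l ((σ (embE l a' hn' hl j1)) : ℕ)
      = cF k' l ((σ (embE l a' hn' hl j2)) : ℕ) := by omega
  rcases cF_inj hl hcc with hvv | hbb
  · have he := congrArg Fin.val (σ.injective (Fin.ext hvv))
    rw [embE_val, embE_val] at he
    exact Fin.ext (eF_mono.injective he)
  · have e1 := embE_block hn' hl ha hfact j1 ⟨hbb.1, hbb.2.1⟩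
    have e2 := embE_block hn' hl ha hfact j2 ⟨hbb.2.2.1, hbb.2.2.2⟩
    exact Fin.ext (by omega)

lemma piF_avoids (hn' : n' + l = n + 1) (hl : 0 < l) (hn0 : 0 < n')
    (hk' : k' + l ≤ n) (ha : a' + l ≤ n)
    (hfact : ∀ i : Fin n, (a' ≤ (i : ℕ) ∧ (i : ℕ) < a' + l) ↔
      (k' ≤ (σ i : ℕ) ∧ (σ i : ℕ) < k' + l))
    (hav : Avoids ⇑σ ⇑τ) : Avoids (piF l k' a' hn' hl hn0 σ) ⇑τ := by
  rintro ⟨f, hf, hpat⟩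
  refine hav ⟨fun j => embE l a' hn' hl (f j), ?_, ?_⟩
  · intro x y hxy
    have h2 : (f x : ℕ) < (f y : ℕ) := hf hxy
    simp only [Fin.lt_def, embE_val]
    exact eF_mono h2
  · intro j k
    rw [← hpat j k]
    simp only [Fin.lt_def, piF_val_def]
    have c1 : cF k' l ((σ (embE l a' hn' hl (f j))) : ℕ) ≤ n - l :=
      cF_le hk' (σ (embE l a' hn' hl (f j))).isLt hl
    have c2 : cF k' l ((σ (embE l a' hn' hl (f k))) : ℕ) ≤ n - l :=
      cF_le hk' (σ (embE l a' hn' hl (f k))).isLt hl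
    constructor
    · intro hlt
      have hle : cF k' l ((σ (embE l a' hn' hl (f j))) : ℕ)
          ≤ cF k' l ((σ (embE l a' hn' hl (f k))) : ℕ) := cF_mono (le_of_lt hlt)
      rcases eq_or_lt_of_le hle with hEq | hlt2
      · rcases cF_inj hl hEq with hvv | hbb
        · omega
        · have e1 := embE_block hn' hl ha hfact (f j) ⟨hbb.1, hbb.2.1⟩
          have e2 := embE_block hn' hl ha hfact (f k) ⟨hbb.2.2.1, hbb.2.2.2⟩
          have hjk : f j = f k := Fin.ext (by omega)
          rw [hjk] at hlt
          omega
      · omega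
    · intro hlt
      by_contra hge
      have hvu : (σ (embE l a' hn' hl (f k)) : ℕ) ≤ (σ (embE l a' hn' hl (f j)) : ℕ) := by
        omega
      have := cF_mono (k' := k') (l := l) hvu
      omega

lemma piF_at_block (hn' : n' + l = n + 1) (hl : 0 < l) (hn0 : 0 < n') (hk' : k' + l ≤ n)
    (hfact : ∀ i : Fin n, (a' ≤ (i : ℕ) ∧ (i : ℕ) < a' + l) ↔
      (k' ≤ (σ i : ℕ) ∧ (σ i : ℕ) < k' + l))
    (j : Fin n') (hj : (j : ℕ) = a') :
    (piF l k' a' hn' hl hn0 σ j : ℕ) = k' := by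
  have hEv : (embE l a' hn' hl j : ℕ) = a' := by
    rw [embE_val, hj]; unfold eF; simp
  have hb := (hfact (embE l a' hn' hl j)).1 (by rw [hEv]; omega)
  rw [piF_val_def]
  unfold cF
  split_ifs <;> omega

lemma piF_block_pos (hn' : n' + l = n + 1) (hl : 0 < l) (hn0 : 0 < n') (hk' : k' + l ≤ n)
    (ha : a' + l ≤ n)
    (hfact : ∀ i : Fin n, (a' ≤ (i : ℕ) ∧ (i : ℕ) < a' + l) ↔
      (k' ≤ (σ i : ℕ) ∧ (σ i : ℕ) < k' + l))
    (j : Fin n') (hval : (piF l k' a' hn' hl hn0 σ j : ℕ) = k') : (j : ℕ) = a' := by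
  rw [piF_val_def] at hval
  have hlt := (σ (embE l a' hn' hl j)).isLt
  have hb : k' ≤ (σ (embE l a' hn' hl j) : ℕ) ∧ (σ (embE l a' hn' hl j) : ℕ) < k' + l := by
    unfold cF at hval; split_ifs at hval <;> omega
  exact embE_block hn' hl ha hfact j hb

end Core

/-! ### The encoding map -/

open Classical in
noncomputable def encF (n l k n' : ℕ) (hn' : n' + l = n + 1) (hl0 : 0 < l) (hn0 : 0 < n')
    (σ : Equiv.Perm (Fin n)) : (Fin l → Fin l) × (Fin n' → Fin n') :=
  if h : ∃ a : ℕ, 1 ≤ a ∧ a ≤ n - l + 1 ∧ ClusterAt l k a σ then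
    (betaF l (k - 1) (h.choose - 1) hl0
        (by obtain ⟨h1, h2, -⟩ := h.choose_spec; omega) σ,
     piF l (k - 1) (h.choose - 1) hn' hl0 hn0 σ)
  else (fun i => i, fun j => j)

end AvoidClusterAux

namespace AvoidClusterAux

lemma cluster_card_le {m : ℕ} (τ : Equiv.Perm (Fin m)) {l n k : ℕ} (hl2 : 2 ≤ l)
    (hn : l ≤ n) (hk1 : 1 ≤ k) (hk2 : k ≤ n - l + 1) :
    (ClusterEvent n l k ∩ AvoidSet n τ).ncard ≤
      (AvoidSet l τ).ncard * (AvoidSet (n - l + 1) τ).ncard := by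
  classical
  have hl0 : 0 < l := by omega
  set n' := n - l + 1 with hn'def
  have hn' : n' + l = n + 1 := by omega
  have hn0 : 0 < n' := by omega
  have hk' : (k - 1) + l ≤ n := by omega
  set T := ((fun q : Equiv.Perm (Fin l) => ⇑q) '' AvoidSet l τ) ×ˢ
    ((fun q : Equiv.Perm (Fin n') => ⇑q) '' AvoidSet n' τ) with hTdef
  have hmaps : ∀ σ ∈ ClusterEvent n l k ∩ AvoidSet n τ, encF n l k n' hn' hl0 hn0 σ ∈ T := by
    intro σ hσ
    have hcl : ∃ a : ℕ, 1 ≤ a ∧ a ≤ n - l + 1 ∧ ClusterAt l k a σ := hσ.1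
    have hav : Avoids ⇑σ ⇑τ := hσ.2
    unfold encF
    rw [dif_pos hcl]
    obtain ⟨ha1, ha2, hca⟩ := hcl.choose_spec
    have hfact := fun i => fact_of_clusterAt hk1 ha1 hca i
    have haA : hcl.choose - 1 + l ≤ n := by omega
    rw [hTdef, Set.mem_prod]
    constructor
    · exact ⟨Equiv.ofBijective _ (Finite.injective_iff_bijective.1 (betaF_inj hl0 haA hfact)),
        betaF_avoids hl0 haA hfact hav, rfl⟩
    · exact ⟨Equiv.ofBijective _
        (Finite.injective_iff_bijective.1 (piF_inj hn' hl0 hn0 hk' haA hfact)),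
        piF_avoids hn' hl0 hn0 hk' haA hfact hav, rfl⟩
  have hinj : Set.InjOn (encF n l k n' hn' hl0 hn0) (ClusterEvent n l k ∩ AvoidSet n τ) := by
    intro σ1 hσ1 σ2 hσ2 heq
    have hcl1 : ∃ a : ℕ, 1 ≤ a ∧ a ≤ n - l + 1 ∧ ClusterAt l k a σ1 := hσ1.1
    have hcl2 : ∃ a : ℕ, 1 ≤ a ∧ a ≤ n - l + 1 ∧ ClusterAt l k a σ2 := hσ2.1
    unfold encF at heq
    rw [dif_pos hcl1, dif_pos hcl2, Prod.mk.injEq] at heq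
    obtain ⟨hbEq, hpEq⟩ := heq
    obtain ⟨ha11, ha12, hca1⟩ := hcl1.choose_spec
    obtain ⟨ha21, ha22, hca2⟩ := hcl2.choose_spec
    have hfact1 := fun i => fact_of_clusterAt hk1 ha11 hca1 i
    have hfact2 := fun i => fact_of_clusterAt hk1 ha21 hca2 i
    have haA1 : hcl1.choose - 1 + l ≤ n := by omega
    have haA2 : hcl2.choose - 1 + l ≤ n := by omega
    -- Step 1: the two block positions agree
    have hj0 : hcl1.choose - 1 < n' := by omega
    have h1 := piF_at_block hn' hl0 hn0 hk' hfact1 (⟨hcl1.choose - 1, hj0⟩ : Fin n') rfl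
    have h2 := congrArg Fin.val (congrFun hpEq (⟨hcl1.choose - 1, hj0⟩ : Fin n'))
    rw [h1] at h2
    have hEqa : hcl1.choose - 1 = hcl2.choose - 1 :=
      piF_block_pos hn' hl0 hn0 hk' haA2 hfact2 _ h2.symm
    rw [← hEqa] at hpEq
    have hbEq' : betaF l (k - 1) (hcl1.choose - 1) hl0 haA1 σ1
        = betaF l (k - 1) (hcl1.choose - 1) hl0 haA1 σ2 :=
      hbEq.trans (betaF_congr hEqa.symm hl0 haA2 haA1 σ2)
    have hfact2' : ∀ i : Fin n,
        (hcl1.choose - 1 ≤ (i : ℕ) ∧ (i : ℕ) < hcl1.choose - 1 + l) ↔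
          (k - 1 ≤ (σ2 i : ℕ) ∧ (σ2 i : ℕ) < k - 1 + l) := by
      rw [hEqa]; exact hfact2
    -- Step 2: reconstruct
    refine Equiv.ext fun i => ?_
    by_cases hib : hcl1.choose - 1 ≤ (i : ℕ) ∧ (i : ℕ) < hcl1.choose - 1 + l
    · have ht : (i : ℕ) - (hcl1.choose - 1) < l := by omega
      have hbv := congrArg Fin.val (congrFun hbEq' (⟨(i : ℕ) - (hcl1.choose - 1), ht⟩ : Fin l))
      rw [betaF_val_def, betaF_val_def] at hbv
      have hem : ∀ pf : hcl1.choose - 1 + l ≤ n,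
          embB l (hcl1.choose - 1) pf (⟨(i : ℕ) - (hcl1.choose - 1), ht⟩ : Fin l) = i :=
        fun pf => Fin.ext
          (show (hcl1.choose - 1) + ((i : ℕ) - (hcl1.choose - 1)) = (i : ℕ) by omega)
      simp only [hem] at hbv
      have b1 := (hfact1 i).1 hib
      have b2 := (hfact2' i).1 hib
      exact Fin.ext (by omega)
    · have hib' : (i : ℕ) < hcl1.choose - 1 ∨ hcl1.choose - 1 + l ≤ (i : ℕ) := by omega
      have hjlt : (if (i : ℕ) < hcl1.choose - 1 then (i : ℕ) else (i : ℕ) - (l - 1)) < n' := by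
        have := i.isLt; split <;> omega
      have hjeq : eF (hcl1.choose - 1) l
          (if (i : ℕ) < hcl1.choose - 1 then (i : ℕ) else (i : ℕ) - (l - 1)) = (i : ℕ) := by
        have := i.isLt; unfold eF; split_ifs <;> omega
      have hpv := congrArg Fin.val (congrFun hpEq
        (⟨if (i : ℕ) < hcl1.choose - 1 then (i : ℕ) else (i : ℕ) - (l - 1), hjlt⟩ : Fin n'))
      rw [piF_val_def, piF_val_def] at hpv
      have hem : ∀ (hh : n' + l = n + 1) (h0 : 0 < l),
          embE l (hcl1.choose - 1) hh h0
            (⟨if (i : ℕ) < hcl1.choose - 1 then (i : ℕ) else (i : ℕ) - (l - 1), hjlt⟩ : Fin n')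
            = i :=
        fun hh h0 => Fin.ext hjeq
      simp only [hem] at hpv
      have c1 : cF (k - 1) l ((σ1 i) : ℕ) ≤ n - l := cF_le hk' (σ1 i).isLt hl0
      have c2 : cF (k - 1) l ((σ2 i) : ℕ) ≤ n - l := cF_le hk' (σ2 i).isLt hl0
      have hcc : cF (k - 1) l ((σ1 i) : ℕ) = cF (k - 1) l ((σ2 i) : ℕ) := by omega
      rcases cF_inj hl0 hcc with hvv | hbb
      · exact Fin.ext hvv
      · exact absurd ((hfact1 i).2 ⟨hbb.1, hbb.2.1⟩) hib
  have hcard := Set.ncard_le_ncard_of_injOn _ hmaps hinj (Set.toFinite T)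
  have hT : T.ncard = (AvoidSet l τ).ncard * (AvoidSet n' τ).ncard := by
    rw [hTdef, ← Nat.card_coe_set_eq, Nat.card_congr (Equiv.Set.prod _ _), Nat.card_prod,
      Nat.card_coe_set_eq, Nat.card_coe_set_eq,
      Set.ncard_image_of_injective _ Equiv.coe_fn_injective,
      Set.ncard_image_of_injective _ Equiv.coe_fn_injective]
  exact hT ▸ hcard

lemma avoidSet_nonempty {m : ℕ} (hm : 2 ≤ m) (τ : Equiv.Perm (Fin m)) (n : ℕ) :
    (AvoidSet n τ).Nonempty := by
  by_cases hsm : StrictMono ⇑τ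
  · refine ⟨⟨fun i => i.rev, fun i => i.rev, fun i => Fin.rev_rev i, fun i => Fin.rev_rev i⟩, ?_⟩
    rintro ⟨f, hf, hp⟩
    have h01 : (⟨0, by omega⟩ : Fin m) < ⟨1, by omega⟩ := Fin.mk_lt_mk.2 (by omega)
    have h1 := (hp ⟨0, by omega⟩ ⟨1, by omega⟩).2 (hsm h01)
    have h2 := hf h01
    simp only [Equiv.coe_fn_mk, Fin.rev_lt_rev] at h1
    exact absurd h1 (lt_asymm h2)
  · refine ⟨Equiv.refl _, ?_⟩
    rintro ⟨f, hf, hp⟩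
    apply hsm
    intro j k hjk
    exact (hp j k).1 (by simpa using hf hjk)

end AvoidClusterAux

open AvoidClusterAux in
/-- limsup upper bound `|S_l(τ)|/L^{l-1}` when the ratios
`|S_{n+1}(τ)|/|S_n(τ)|` converge to `L > 0`. -/
theorem avoid_cluster_limsup_upper (m : ℕ) (hm : 2 ≤ m) (τ : Equiv.Perm (Fin m))
    (L : ℝ) (hL : 0 < L)
    (hconv : Filter.Tendsto
      (fun n : ℕ => ((AvoidSet (n + 1) τ).ncard : ℝ) / ((AvoidSet n τ).ncard : ℝ))
      Filter.atTop (nhds L))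
    (l : ℕ) (hl : 2 ≤ l) (k : ℕ → ℕ) (hk : ∀ n : ℕ, 1 ≤ k n ∧ k n ≤ n - l + 1) :
    Filter.limsup
      (fun n : ℕ => ((ClusterEvent n l (k n) ∩ AvoidSet n τ).ncard : ℝ) /
        ((AvoidSet n τ).ncard : ℝ)) Filter.atTop ≤
      ((AvoidSet l τ).ncard : ℝ) / L ^ (l - 1) := by
  have hpos : ∀ n : ℕ, (0 : ℝ) < ((AvoidSet n τ).ncard : ℝ) := fun n =>
    Nat.cast_pos.2 ((Set.ncard_pos (Set.toFinite _)).2 (avoidSet_nonempty hm τ n))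
  have hG : ∀ q : ℕ, Tendsto
      (fun n : ℕ => ((AvoidSet n τ).ncard : ℝ) / ((AvoidSet (n + q) τ).ncard : ℝ))
      atTop (nhds ((L ^ q)⁻¹)) := by
    intro q
    induction q with
    | zero =>
        have he : (fun n : ℕ => ((AvoidSet n τ).ncard : ℝ) / ((AvoidSet (n + 0) τ).ncard : ℝ))
            = fun _ => (1 : ℝ) := funext fun n => by
          rw [Nat.add_zero]; exact div_self (hpos n).ne'
        rw [he, pow_zero, inv_one]
        exact tendsto_const_nhds
    | succ q ih =>
        have h2 : Tendsto
            (fun n : ℕ => ((AvoidSet (n + q) τ).ncard : ℝ) / ((AvoidSet (n + q + 1) τ).ncard : ℝ))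
            atTop (nhds L⁻¹) := by
          have h3 := (hconv.comp (tendsto_add_atTop_nat q)).inv₀ hL.ne'
          refine h3.congr fun n => ?_
          simp only [Function.comp_apply]
          rw [inv_div]
        have h4 := ih.mul h2
        have he : ∀ n : ℕ,
            (((AvoidSet n τ).ncard : ℝ) / ((AvoidSet (n + q) τ).ncard : ℝ))
              * (((AvoidSet (n + q) τ).ncard : ℝ) / ((AvoidSet (n + q + 1) τ).ncard : ℝ))
            = ((AvoidSet n τ).ncard : ℝ) / ((AvoidSet (n + (q + 1)) τ).ncard : ℝ) := by
          intro n
          rw [show n + (q + 1) = n + q + 1 from rfl, div_mul_div_cancel₀ (hpos (n + q)).ne']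
        have hval : (L ^ (q + 1))⁻¹ = (L ^ q)⁻¹ * L⁻¹ := by rw [pow_succ, mul_inv]
        rw [hval]
        exact Tendsto.congr he h4
  have hg : Tendsto
      (fun n : ℕ => ((AvoidSet (n - l + 1) τ).ncard : ℝ) / ((AvoidSet n τ).ncard : ℝ))
      atTop (nhds ((L ^ (l - 1))⁻¹)) := by
    rw [← tendsto_add_atTop_iff_nat l]
    have h5 := (hG (l - 1)).comp (tendsto_add_atTop_nat 1)
    refine Tendsto.congr (fun n => ?_) h5
    simp only [Function.comp_apply]
    have e1 : n + l - l + 1 = n + 1 := by omega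
    have e2 : n + 1 + (l - 1) = n + l := by omega
    rw [e1, e2]
  have hlim : Tendsto
      (fun n : ℕ => ((AvoidSet l τ).ncard : ℝ) *
        (((AvoidSet (n - l + 1) τ).ncard : ℝ) / ((AvoidSet n τ).ncard : ℝ)))
      atTop (nhds (((AvoidSet l τ).ncard : ℝ) * (L ^ (l - 1))⁻¹)) :=
    tendsto_const_nhds.mul hg
  have hev : ∀ᶠ n in atTop,
      ((ClusterEvent n l (k n) ∩ AvoidSet n τ).ncard : ℝ) / ((AvoidSet n τ).ncard : ℝ)
        ≤ ((AvoidSet l τ).ncard : ℝ) *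
            (((AvoidSet (n - l + 1) τ).ncard : ℝ) / ((AvoidSet n τ).ncard : ℝ)) := by
    refine eventually_atTop.2 ⟨l, fun n hn => ?_⟩
    rw [← mul_div_assoc]
    apply div_le_div_of_nonneg_right ?_ (hpos n).le
    · exact_mod_cast cluster_card_le τ hl hn (hk n).1 (hk n).2
  have hcob : IsCoboundedUnder (· ≤ ·) atTop
      (fun n : ℕ => ((ClusterEvent n l (k n) ∩ AvoidSet n τ).ncard : ℝ) /
        ((AvoidSet n τ).ncard : ℝ)) :=
    isCoboundedUnder_le_of_eventually_le atTop (x := 0)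
      (Eventually.of_forall fun n => div_nonneg (Nat.cast_nonneg _) (Nat.cast_nonneg _))
  have hbdd := hlim.isBoundedUnder_le
  have hle := Filter.limsup_le_limsup hev hcob hbdd
  rw [hlim.limsup_eq] at hle
  rw [div_eq_mul_inv]
  exact hle
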